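/- Let U ⊆ ℝ^n be convex, X a metric space, F : U → Ms_k(X) a uniformly continuous map to the space of k-element multisets of X with modulus of uniform continuity ω (i.e. d(u,u') < ω(ε) implies the multiset distance between F(u) and F(u') is < ε), and f : U → X a continuous function with f(u) ∈ F(u) for all u. Then f is uniformly continuous with modulus ε ↦ ω(ε/2k). -/

import Mathlib

open Set

/-- The multiset (semi)distance on `k`-tuples: the min over permutations of the
sup of pointwise distances. -/
noncomputable def msDist {k : ℕ} {X : Type*} [MetricSpace X]
    (x y : Fin k → X) : ℝ :=
  ⨅ σ : Equiv.Perm (Fin k), ⨆ i : Fin k, dist (x i) (y (σ i))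

private lemma msDist_exists_close {k : ℕ} {X : Type*} [MetricSpace X]
    (hk : 0 < k) (x y : Fin k → X) {ε : ℝ} (h : msDist x y < ε) (i : Fin k) :
    ∃ j, dist (x i) (y j) < ε := by
  have : Nonempty (Fin k) := ⟨⟨0, hk⟩⟩
  obtain ⟨σ, hσ⟩ := Finite.exists_min
    (fun σ : Equiv.Perm (Fin k) => ⨆ i, dist (x i) (y (σ i)))
  unfold msDist at h
  have h1 : (⨆ i, dist (x i) (y (σ i))) ≤
      ⨅ σ : Equiv.Perm (Fin k), ⨆ i, dist (x i) (y (σ i)) := le_ciInf hσ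
  have h2 : dist (x i) (y (σ i)) ≤ ⨆ i, dist (x i) (y (σ i)) :=
    le_ciSup (Set.Finite.bddAbove
      (Set.finite_range (fun i => dist (x i) (y (σ i))))) i
  exact ⟨σ i, lt_of_le_of_lt h2 (lt_of_le_of_lt h1 h)⟩

/-- if `F : U → Ms_k(X)` is uniformly continuous with modulus `ω`
on a convex `U ⊆ ℝ^n`, and `f : U → X` is a continuous selection of `F` (for
all `u ∈ U`, `f u` is one of the `k` elements of the multiset `F u`), then `f`
is uniformly continuous with modulus `ε ↦ ω(ε/2k)`. -/
theorem selection_uniform_continuity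
    {n k : ℕ} {X : Type*} [MetricSpace X]
    (U : Set (EuclideanSpace ℝ (Fin n))) (hU : Convex ℝ U)
    (F : EuclideanSpace ℝ (Fin n) → Fin k → X)
    (f : EuclideanSpace ℝ (Fin n) → X)
    (ω : ℝ → ℝ)
    (hF : ∀ ε > 0, ∀ u ∈ U, ∀ u' ∈ U,
      dist u u' < ω ε → msDist (F u) (F u') < ε)
    (hf : ContinuousOn f U)
    (hsel : ∀ u ∈ U, ∃ i : Fin k, f u = F u i) :
    ∀ ε > 0, ∀ u ∈ U, ∀ u' ∈ U,
      dist u u' < ω (ε / (2 * k)) → dist (f u) (f u') < ε := by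
  classical
  intro ε hε u hu u' hu' hd
  rcases Nat.eq_zero_or_pos k with hk0 | hk
  · obtain ⟨i, -⟩ := hsel u hu
    subst hk0
    exact i.elim0
  have hkR : (0:ℝ) < k := by exact_mod_cast hk
  set ε' : ℝ := ε / (2 * k) with hε'def
  have hε' : 0 < ε' := div_pos hε (by positivity)
  set c : Fin k → X := F u with hc
  -- the path
  set γ : ℝ → EuclideanSpace ℝ (Fin n) := fun t => u + t • (u' - u) with hγ
  have hγ0 : γ 0 = u := by simp [hγ]
  have hγ1 : γ 1 = u' := by simp [hγ]
  have hγmem : ∀ t ∈ Icc (0:ℝ) 1, γ t ∈ U := by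
    intro t ht
    have h1 : (1 - t) • u + t • u' ∈ U :=
      hU hu hu' (by linarith [ht.2]) ht.1 (by ring)
    have : γ t = (1 - t) • u + t • u' := by
      simp only [hγ, smul_sub, sub_smul, one_smul]
      abel
    rw [this]; exact h1
  have hγdist : ∀ t ∈ Icc (0:ℝ) 1, dist (γ t) u < ω ε' := by
    intro t ht
    have h1 : dist (γ t) u = |t| * dist u' u := by
      rw [dist_eq_norm, dist_eq_norm]
      simp [hγ, add_sub_cancel_left, norm_smul, Real.norm_eq_abs]
    have h2 : |t| ≤ 1 := abs_le.2 ⟨by linarith [ht.1], ht.2⟩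
    calc dist (γ t) u = |t| * dist u' u := h1
      _ ≤ 1 * dist u' u := by
          exact mul_le_mul_of_nonneg_right h2 dist_nonneg
      _ = dist u u' := by rw [one_mul, dist_comm]
      _ < ω ε' := hd
  have key : ∀ t ∈ Icc (0:ℝ) 1, ∃ j, dist (f (γ t)) (c j) < ε' := by
    intro t ht
    obtain ⟨i, hi⟩ := hsel (γ t) (hγmem t ht)
    have hms := hF ε' hε' (γ t) (hγmem t ht) u hu (hγdist t ht)
    obtain ⟨j, hj⟩ := msDist_exists_close hk _ _ hms i
    exact ⟨j, by rwa [hi]⟩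
  obtain ⟨i0, hi0⟩ := hsel u hu
  set e2 : ℝ := 2 * ε' with he2
  -- the chain sets
  set A : ℕ → Finset (Fin k) := fun m =>
    Nat.rec {i0} (fun _ Am => Am ∪ Finset.univ.filter
      (fun j => ∃ i ∈ Am, dist (c i) (c j) < e2)) m with hA
  have hAsucc : ∀ m, A (m+1) = A m ∪ Finset.univ.filter
      (fun j => ∃ i ∈ A m, dist (c i) (c j) < e2) := fun m => rfl
  have hmono : ∀ m, A m ⊆ A (m+1) := fun m => by
    rw [hAsucc]; exact Finset.subset_union_left
  have hi0A : ∀ m, i0 ∈ A m := by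
    intro m
    induction m with
    | zero => exact Finset.mem_singleton_self i0
    | succ m ih => exact hmono m ih
  have hdistA : ∀ m, ∀ j ∈ A m, dist (c j) (c i0) ≤ e2 * m := by
    intro m
    induction m with
    | zero =>
      intro j hj
      have hj' : j ∈ ({i0} : Finset (Fin k)) := hj
      rw [Finset.mem_singleton] at hj'
      simp [hj']
    | succ m ih =>
      intro j hj
      rw [hAsucc, Finset.mem_union] at hj
      have hstep : e2 * m ≤ e2 * (m+1) := by
        have : (0:ℝ) ≤ e2 := by positivity
        nlinarith
      rcases hj with hj | hj
      · calc dist (c j) (c i0) ≤ e2 * m := ih j hj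
          _ ≤ e2 * (m+1 : ℕ) := by push_cast; nlinarith [hε']
      · rw [Finset.mem_filter] at hj
        obtain ⟨-, i, hi, hdij⟩ := hj
        calc dist (c j) (c i0) ≤ dist (c j) (c i) + dist (c i) (c i0) :=
              dist_triangle _ _ _
          _ ≤ e2 + e2 * m := by
              have := ih i hi
              rw [dist_comm] at hdij
              linarith
          _ = e2 * (m+1 : ℕ) := by push_cast; ring
  -- stabilization
  have hstab : ∃ m < k, A (m+1) = A m := by
    by_contra hcon
    push_neg at hcon
    have hcard : ∀ m ≤ k, m + 1 ≤ (A m).card := by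
      intro m
      induction m with
      | zero => intro _; simp [hA]
      | succ m ih =>
        intro hm
        have h1 : A m ⊂ A (m+1) :=
          (Finset.ssubset_iff_of_subset (hmono m)).2 (by
            rcases Finset.exists_of_ssubset
              (lt_of_le_of_ne (hmono m) (Ne.symm (hcon m (by omega)))) with ⟨x, hx1, hx2⟩
            exact ⟨x, hx1, hx2⟩)
        have := Finset.card_lt_card h1
        have := ih (by omega)
        omega
    have h1 := hcard k le_rfl
    have h2 : (A k).card ≤ k := by
      simpa using Finset.card_le_univ (A k)
    omega
  obtain ⟨m, hmk, hAm⟩ := hstab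
  set C : Finset (Fin k) := A m with hC
  have hi0C : i0 ∈ C := hi0A m
  have hclosed : ∀ j ∈ C, ∀ j', dist (c j) (c j') < e2 → j' ∈ C := by
    intro j hj j' hdj
    have : j' ∈ A (m+1) := by
      rw [hAsucc, Finset.mem_union]
      right
      rw [Finset.mem_filter]
      exact ⟨Finset.mem_univ _, j, hj, hdj⟩
    rwa [hAm] at this
  have hCdist : ∀ j ∈ C, dist (c j) (c i0) ≤ e2 * ((k:ℝ) - 1) := by
    intro j hj
    have h1 := hdistA m j hj
    have h2 : (m:ℝ) ≤ (k:ℝ) - 1 := by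
      have : (m:ℝ) + 1 ≤ k := by exact_mod_cast hmk
      linarith
    have : (0:ℝ) ≤ e2 := by positivity
    nlinarith
  -- topology
  set V : Set X := ⋃ j ∈ C, Metric.ball (c j) ε' with hV
  set W : Set X := ⋃ j ∈ (Cᶜ : Finset (Fin k)), Metric.ball (c j) ε' with hW
  have hVopen : IsOpen V := isOpen_biUnion fun _ _ => Metric.isOpen_ball
  have hWopen : IsOpen W := isOpen_biUnion fun _ _ => Metric.isOpen_ball
  have hVW : V ∩ W = ∅ := by
    ext x
    simp only [mem_inter_iff, mem_empty_iff_false, iff_false, not_and]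
    intro hxV hxW
    rw [hV, mem_iUnion₂] at hxV
    rw [hW, mem_iUnion₂] at hxW
    obtain ⟨j, hjC, hxj⟩ := hxV
    obtain ⟨j', hj'C, hxj'⟩ := hxW
    rw [Finset.mem_compl] at hj'C
    apply hj'C
    apply hclosed j hjC j'
    rw [Metric.mem_ball] at hxj hxj'
    calc dist (c j) (c j') ≤ dist (c j) x + dist x (c j') := dist_triangle _ _ _
      _ < ε' + ε' := by rw [dist_comm (c j) x]; linarith
      _ = e2 := by rw [he2]; ring
  set T : Set X := (f ∘ γ) '' Icc (0:ℝ) 1 with hT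
  have hγcont : Continuous γ := by
    apply continuous_const.add
    exact continuous_id.smul continuous_const
  have hTconn : IsPreconnected T := by
    apply IsPreconnected.image isPreconnected_Icc
    exact hf.comp hγcont.continuousOn hγmem
  have hTVW : T ⊆ V ∪ W := by
    rintro x ⟨t, ht, rfl⟩
    obtain ⟨j, hj⟩ := key t ht
    by_cases hjC : j ∈ C
    · left; rw [hV, mem_iUnion₂]; exact ⟨j, hjC, Metric.mem_ball.2 hj⟩
    · right; rw [hW, mem_iUnion₂]
      exact ⟨j, Finset.mem_compl.2 hjC, Metric.mem_ball.2 hj⟩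
  have hfuV : f u ∈ V := by
    rw [hV, mem_iUnion₂]
    refine ⟨i0, hi0C, Metric.mem_ball.2 ?_⟩
    rw [hi0]; simpa [hc] using hε'
  have hfuT : f u ∈ T := ⟨0, by simp, by simp [hγ0]⟩
  have hfu'T : f u' ∈ T := ⟨1, by simp, by simp [hγ1]⟩
  have hfu'V : f u' ∈ V := by
    rcases hTVW hfu'T with h | h
    · exact h
    · exfalso
      have := hTconn V W hVopen hWopen hTVW ⟨f u, hfuT, hfuV⟩ ⟨f u', hfu'T, h⟩
      obtain ⟨x, -, hx⟩ := this
      rw [hVW] at hx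
      exact hx
  -- conclude
  rw [hV, mem_iUnion₂] at hfu'V
  obtain ⟨j, hjC, hj⟩ := hfu'V
  rw [Metric.mem_ball] at hj
  have h1 : dist (f u) (c i0) = 0 := by rw [hi0]; simp [hc]
  have h2 := hCdist j hjC
  have h3 : dist (f u) (f u') ≤ dist (f u) (c i0) + dist (c i0) (c j) + dist (c j) (f u') :=
    dist_triangle4 _ _ _ _
  have h4 : ε' * (2 * k) = ε := by
    rw [hε'def]; exact div_mul_cancel₀ ε (by positivity)
  rw [dist_comm (c i0) (c j)] at h3
  rw [dist_comm (c j) (f u')] at h3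
  have : (0:ℝ) < ε' := hε'
  nlinarith [hkR]
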